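/- arXiv:0909.3137 — 2 statements merged into one kernel-verified Lean document; each statement's English description precedes it below -/
import Mathlib

section
/- If P is an ε-net over S with respect to a Lipschitz function f (with ε < 1), then every point p in P has aspect ratio at most ε/(1−ε); that is, for all x in the restricted Voronoi cell of p, |px| ≤ (ε/(1−ε))·min_{q∈P, q≠p} |pq|. In particular, an ε-net is ε/(1−ε)-well-spaced. -/
/-- An ε-net (ε < 1) over S with respect to a Lipschitz function f is
ε/(1−ε)-well-spaced: every point p of P and every x in the restricted Voronoi cell
of p satisfy |px| ≤ (ε/(1−ε))·min_{q∈P, q≠p} |pq|. -/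
theorem epsNet_wellSpaced {d : ℕ} (S : Set (EuclideanSpace ℝ (Fin d)))
    (P : Finset (EuclideanSpace ℝ (Fin d))) (f : EuclideanSpace ℝ (Fin d) → ℝ)
    (ε : ℝ) (hε0 : 0 ≤ ε) (hε1 : ε < 1)
    (hPS : ∀ p ∈ P, (p : EuclideanSpace ℝ (Fin d)) ∈ S)
    (hLip : ∀ x ∈ S, ∀ y ∈ S, f x ≤ f y + dist x y)
    (hcover : ∀ x ∈ S, ∃ p ∈ P, dist p x ≤ ε * f x)
    (hpack : ∀ p ∈ P, ∀ q ∈ P, q ≠ p → f p ≤ dist p q) :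
    ∀ p ∈ P, ∀ x ∈ S, (∀ q ∈ P, dist p x ≤ dist q x) →
      ∀ q ∈ P, q ≠ p → dist p x ≤ (ε / (1 - ε)) * dist p q := by
  intro p hp x hx hvor q hq hqp
  obtain ⟨r, hr, hrx⟩ := hcover x hx
  have h1 : dist p x ≤ ε * f x := le_trans (hvor r hr) hrx
  have h2 : f x ≤ f p + dist p x := by
    have := hLip x hx p (hPS p hp)
    rwa [dist_comm] at this
  have h3 : f p ≤ dist p q := hpack p hp q hq hqp
  have key : dist p x ≤ ε * (dist p q + dist p x) := by
    calc dist p x ≤ ε * f x := h1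
      _ ≤ ε * (dist p q + dist p x) := by
          apply mul_le_mul_of_nonneg_left _ hε0
          linarith
  have h1e : 0 < 1 - ε := by linarith
  rw [div_mul_eq_mul_div, le_div_iff₀ h1e]
  nlinarith
end

section
/- Range property of Morton order: for a dyadic cube C of side 2^h with minimum corner c (all low h bits of each coordinate of c are zero), a point p lies in C if and only if Morton(c) ≤ Morton(p) ≤ Morton(c + (2^h−1,…,2^h−1)). Hence the points of C form a contiguous range in any array sorted by Morton number. -/
open Finset

/-- The Morton (Z-order) number of a point p ∈ {0,…,2^w−1}^d. -/
def morton (w d : ℕ) (p : Fin d → ℕ) : ℕ :=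
  ∑ j ∈ Finset.range w, ∑ i : Fin d,
    (Nat.testBit (p i) j).toNat * 2 ^ (j * d + (d - 1 - (i : ℕ)))

namespace MortonAux

/-- Sum of the first `n` bits `f k` weighted by `2^k`. -/
def bitsum (f : ℕ → Bool) (n : ℕ) : ℕ := ∑ k ∈ Finset.range n, (f k).toNat * 2 ^ k

lemma bitsum_lt (f : ℕ → Bool) (n : ℕ) : bitsum f n < 2 ^ n := by
  induction n with
  | zero => simp [bitsum]
  | succ n ih =>
    rw [bitsum, Finset.sum_range_succ, ← bitsum]
    have h1 : (f n).toNat ≤ 1 := Bool.toNat_le _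
    have h2 : (f n).toNat * 2 ^ n ≤ 1 * 2 ^ n := Nat.mul_le_mul_right _ h1
    have h3 : 2 ^ (n + 1) = 2 ^ n + 2 ^ n := by ring
    omega

lemma bitsum_testBit (f : ℕ → Bool) (n m : ℕ) (h : m < n) :
    (bitsum f n).testBit m = f m := by
  induction n with
  | zero => omega
  | succ n ih =>
    rw [bitsum, Finset.sum_range_succ, ← bitsum]
    rcases lt_or_eq_of_le (Nat.lt_succ_iff.mp h) with hm | hm
    · have hmod : (bitsum f n + (f n).toNat * 2 ^ n) % 2 ^ n = bitsum f n := by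
        rw [Nat.add_mul_mod_self_right, Nat.mod_eq_of_lt (bitsum_lt f n)]
      have h2 := Nat.testBit_mod_two_pow (bitsum f n + (f n).toNat * 2 ^ n) n m
      have hd : decide (m < n) = true := by simp [hm]
      rw [hmod, hd, Bool.true_and] at h2
      rw [← h2]; exact ih hm
    · subst hm
      cases hfn : f m with
      | false =>
        simp only [hfn, Bool.toNat_false, Nat.zero_mul, Nat.add_zero]
        exact Nat.testBit_lt_two_pow (bitsum_lt f m)
      | true =>
        simp only [hfn, Bool.toNat_true, Nat.one_mul]
        have hdiv : (bitsum f m + 2 ^ m) / 2 ^ m = 1 := by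
          rw [Nat.add_div_right _ (Nat.two_pow_pos m),
            Nat.div_eq_of_lt (bitsum_lt f m)]
        rw [Nat.testBit_eq_decide_div_mod_eq, hdiv]
        decide

lemma morton_eq_bitsum (w d : ℕ) (hd : 0 < d) (p : Fin d → ℕ) :
    morton w d p =
      bitsum (fun k => (p ⟨(d - 1 - k % d) % d, Nat.mod_lt _ hd⟩).testBit (k / d)) (w * d) := by
  rw [morton, bitsum, ← Finset.sum_product']
  refine Finset.sum_nbij' (i := fun a => a.1 * d + (d - 1 - (a.2 : ℕ)))
    (j := fun k => (k / d, ⟨(d - 1 - k % d) % d, Nat.mod_lt _ hd⟩)) ?_ ?_ ?_ ?_ ?_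
  · rintro ⟨j, i⟩ hji
    simp only [Finset.mem_product, Finset.mem_range] at hji ⊢
    have hi : (i : ℕ) < d := i.isLt
    have : j * d + (d - 1 - (i : ℕ)) < (j + 1) * d := by
      rw [add_mul, one_mul]; omega
    exact lt_of_lt_of_le this (Nat.mul_le_mul_right d hji.1)
  · intro k hk
    simp only [Finset.mem_range] at hk
    simp only [Finset.mem_product, Finset.mem_range, Finset.mem_univ, and_true]
    exact Nat.div_lt_of_lt_mul (by rwa [mul_comm] at hk)
  · rintro ⟨j, i⟩ hji
    have hi : (i : ℕ) < d := i.isLt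
    have hr : d - 1 - (i : ℕ) < d := by omega
    have h1 : (j * d + (d - 1 - (i : ℕ))) / d = j := by
      rw [mul_comm, Nat.mul_add_div hd, Nat.div_eq_of_lt hr, Nat.add_zero]
    have h2 : (j * d + (d - 1 - (i : ℕ))) % d = d - 1 - (i : ℕ) := by
      rw [mul_comm, Nat.mul_add_mod, Nat.mod_eq_of_lt hr]
    have h3 : d - 1 - (d - 1 - (i : ℕ)) = (i : ℕ) := by omega
    simp only [h1, h2, h3, Nat.mod_eq_of_lt hi, Fin.eta]
  · intro k hk
    have hr : k % d < d := Nat.mod_lt _ hd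
    have h3 : (d - 1 - k % d) % d = d - 1 - k % d := Nat.mod_eq_of_lt (by omega)
    simp only [h3]
    have h4 : d - 1 - (d - 1 - k % d) = k % d := by omega
    rw [h4, mul_comm]
    exact Nat.div_add_mod k d
  · rintro ⟨j, i⟩ hji
    have hi : (i : ℕ) < d := i.isLt
    have hr : d - 1 - (i : ℕ) < d := by omega
    have h1 : (j * d + (d - 1 - (i : ℕ))) / d = j := by
      rw [mul_comm, Nat.mul_add_div hd, Nat.div_eq_of_lt hr, Nat.add_zero]
    have h2 : (j * d + (d - 1 - (i : ℕ))) % d = d - 1 - (i : ℕ) := by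
      rw [mul_comm, Nat.mul_add_mod, Nat.mod_eq_of_lt hr]
    have h3 : d - 1 - (d - 1 - (i : ℕ)) = (i : ℕ) := by omega
    simp only [h1, h2, h3, Nat.mod_eq_of_lt hi, Fin.eta]

lemma morton_lt (w d : ℕ) (hd : 0 < d) (p : Fin d → ℕ) :
    morton w d p < 2 ^ (w * d) := by
  rw [morton_eq_bitsum w d hd p]; exact bitsum_lt _ _

lemma testBit_morton (w d : ℕ) (p : Fin d → ℕ) (j : ℕ) (hj : j < w) (i : Fin d) :
    (morton w d p).testBit (j * d + (d - 1 - (i : ℕ))) = (p i).testBit j := by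
  have hd : 0 < d := i.pos
  have hi : (i : ℕ) < d := i.isLt
  have hr : d - 1 - (i : ℕ) < d := by omega
  have h1 : (j * d + (d - 1 - (i : ℕ))) / d = j := by
    rw [mul_comm, Nat.mul_add_div hd, Nat.div_eq_of_lt hr, Nat.add_zero]
  have h2 : (j * d + (d - 1 - (i : ℕ))) % d = d - 1 - (i : ℕ) := by
    rw [mul_comm, Nat.mul_add_mod, Nat.mod_eq_of_lt hr]
  have hlt : j * d + (d - 1 - (i : ℕ)) < w * d := by
    have : j * d + (d - 1 - (i : ℕ)) < (j + 1) * d := by rw [add_mul, one_mul]; omega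
    exact lt_of_lt_of_le this (Nat.mul_le_mul_right d hj)
  rw [morton_eq_bitsum w d hd p, bitsum_testBit _ _ _ hlt]
  have h3 : d - 1 - (d - 1 - (i : ℕ)) = (i : ℕ) := by omega
  simp only [h1, h2, h3, Nat.mod_eq_of_lt hi, Fin.eta]

lemma morton_inj (w d : ℕ) (p q : Fin d → ℕ) (hp : ∀ i, p i < 2 ^ w)
    (hq : ∀ i, q i < 2 ^ w) (h : morton w d p = morton w d q) (i : Fin d) : p i = q i := by
  apply Nat.eq_of_testBit_eq
  intro j
  rcases lt_or_ge j w with hj | hj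
  · have h1 := testBit_morton w d p j hj i
    rw [h, testBit_morton w d q j hj i] at h1
    exact h1.symm
  · have hpj : p i < 2 ^ j := lt_of_lt_of_le (hp i) (Nat.pow_le_pow_right (by norm_num) hj)
    have hqj : q i < 2 ^ j := lt_of_lt_of_le (hq i) (Nat.pow_le_pow_right (by norm_num) hj)
    rw [Nat.testBit_lt_two_pow hpj, Nat.testBit_lt_two_pow hqj]

lemma morton_split (w d h : ℕ) (hh : h ≤ w) (p : Fin d → ℕ) :
    morton w d p = morton h d p + 2 ^ (h * d) * morton (w - h) d (fun i => p i / 2 ^ h) := by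
  unfold morton
  rw [Finset.range_eq_Ico, ← Finset.sum_Ico_consecutive _ (Nat.zero_le h) hh,
    ← Finset.range_eq_Ico]
  congr 1
  rw [Finset.sum_Ico_eq_sum_range, Finset.mul_sum]
  refine Finset.sum_congr rfl fun k _ => ?_
  rw [Finset.mul_sum]
  refine Finset.sum_congr rfl fun i _ => ?_
  have hb : (p i / 2 ^ h).testBit k = (p i).testBit (h + k) := by
    rw [← Nat.shiftRight_eq_div_pow, Nat.testBit_shiftRight]
  have he : (h + k) * d + (d - 1 - (i : ℕ)) = h * d + (k * d + (d - 1 - (i : ℕ))) := by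
    rw [add_mul]; omega
  rw [hb, he, pow_add]
  ring

end MortonAux

open MortonAux in
/-- range property of Morton order. For a dyadic cube of side 2^h with
minimum corner c (each coordinate of c a multiple of 2^h), a point p ∈ {0,…,2^w−1}^d
lies in the cube iff Morton(c) ≤ Morton(p) ≤ Morton(c + (2^h−1,…,2^h−1)); hence the
cube's points form a contiguous range in Morton order. -/
theorem morton_range_property (w d h : ℕ) (hh : h ≤ w) (c p : Fin d → ℕ)
    (hcdiv : ∀ i, 2 ^ h ∣ c i) (hc : ∀ i, c i < 2 ^ w) (hp : ∀ i, p i < 2 ^ w) :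
    (∀ i, c i ≤ p i ∧ p i ≤ c i + (2 ^ h - 1)) ↔
      (morton w d c ≤ morton w d p ∧
        morton w d p ≤ morton w d (fun i => c i + (2 ^ h - 1))) := by
  rcases Nat.eq_zero_or_pos d with rfl | hd
  · constructor
    · intro _
      constructor <;> simp [morton]
    · intro _ i
      exact i.elim0
  have hpow : 0 < 2 ^ h := Nat.two_pow_pos h
  set δ : Fin d → ℕ := fun i => c i + (2 ^ h - 1) with hδ
  have hδdiv : ∀ i, δ i / 2 ^ h = c i / 2 ^ h := by
    intro i
    obtain ⟨m, hm⟩ := hcdiv i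
    simp only [hδ, hm]
    rw [Nat.mul_add_div hpow, Nat.div_eq_of_lt (by omega), Nat.mul_div_cancel_left m hpow,
      Nat.add_zero]
  have hcbit : ∀ i j, j < h → (c i).testBit j = false := by
    intro i j hj
    obtain ⟨m, hm⟩ := hcdiv i
    have h2 := Nat.testBit_mod_two_pow (c i) h j
    have hmod : c i % 2 ^ h = 0 := by rw [hm]; exact Nat.mul_mod_right _ _
    rw [hmod] at h2
    simp only [Nat.zero_testBit] at h2
    have hdj : decide (j < h) = true := by simp [hj]
    rw [hdj, Bool.true_and] at h2
    exact h2.symm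
  have hδbit : ∀ i j, j < h → (δ i).testBit j = true := by
    intro i j hj
    obtain ⟨m, hm⟩ := hcdiv i
    have hmod : δ i % 2 ^ h = 2 ^ h - 1 := by
      simp only [hδ, hm]
      rw [Nat.mul_add_mod, Nat.mod_eq_of_lt (by omega)]
    have h2 := Nat.testBit_mod_two_pow (δ i) h j
    rw [hmod, Nat.testBit_two_pow_sub_one] at h2
    have hdj : decide (j < h) = true := by simp [hj]
    rw [hdj, Bool.true_and] at h2
    exact h2.symm
  have hmc0 : morton h d c = 0 := by
    unfold morton
    refine Finset.sum_eq_zero fun j hj => Finset.sum_eq_zero fun i _ => ?_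
    rw [hcbit i j (Finset.mem_range.mp hj)]
    simp
  have hmono : morton h d p ≤ morton h d δ := by
    unfold morton
    refine Finset.sum_le_sum fun j hj => Finset.sum_le_sum fun i _ => ?_
    rw [hδbit i j (Finset.mem_range.mp hj)]
    have h1 : ((p i).testBit j).toNat ≤ 1 := Bool.toNat_le _
    have h2 : ((p i).testBit j).toNat * 2 ^ (j * d + (d - 1 - (i : ℕ)))
        ≤ 1 * 2 ^ (j * d + (d - 1 - (i : ℕ))) := Nat.mul_le_mul_right _ h1
    simpa using h2
  have hmlt : ∀ q : Fin d → ℕ, morton h d q < 2 ^ (h * d) := fun q => morton_lt h d hd q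
  set B : (Fin d → ℕ) → ℕ := fun q => morton (w - h) d (fun i => q i / 2 ^ h) with hB
  have hsplit : ∀ q, morton w d q = morton h d q + 2 ^ (h * d) * B q :=
    fun q => morton_split w d h hh q
  have hBδ : B δ = B c := by
    simp only [hB]
    congr 1
    funext i
    exact hδdiv i
  have hMc : morton w d c = 2 ^ (h * d) * B c := by rw [hsplit c, hmc0, Nat.zero_add]
  have hMδ : morton w d δ = morton h d δ + 2 ^ (h * d) * B c := by rw [hsplit δ, hBδ]
  constructor
  · intro H
    have hBp : B p = B c := by
      simp only [hB]
      congr 1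
      funext i
      obtain ⟨m, hm⟩ := hcdiv i
      have h1 := (H i).1
      have h2 := (H i).2
      rw [hm] at h1 h2 ⊢
      have hpi : p i = 2 ^ h * m + (p i - 2 ^ h * m) := by omega
      rw [hpi, Nat.mul_add_div hpow, Nat.mul_div_cancel_left m hpow,
        Nat.div_eq_of_lt (by omega), Nat.add_zero]
    constructor
    · rw [hMc, hsplit p, hBp]
      exact Nat.le_add_left _ _
    · rw [hMδ, hsplit p, hBp]
      exact Nat.add_le_add_right hmono _
  · rintro ⟨h1, h2⟩
    rw [hMc, hsplit p] at h1
    rw [hMδ, hsplit p] at h2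
    have hAp := hmlt p
    have hAδ := hmlt δ
    have hBcp : B c ≤ B p := by
      by_contra hlt
      push_neg at hlt
      have hkey : morton h d p + 2 ^ (h * d) * B p < 2 ^ (h * d) * B c := by
        calc morton h d p + 2 ^ (h * d) * B p < 2 ^ (h * d) + 2 ^ (h * d) * B p := by omega
          _ = 2 ^ (h * d) * (B p + 1) := by ring
          _ ≤ 2 ^ (h * d) * B c := Nat.mul_le_mul_left _ hlt
      omega
    have hBpc : B p ≤ B c := by
      by_contra hlt
      push_neg at hlt
      have hkey : morton h d δ + 2 ^ (h * d) * B c < 2 ^ (h * d) * B p := by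
        calc morton h d δ + 2 ^ (h * d) * B c < 2 ^ (h * d) + 2 ^ (h * d) * B c := by omega
          _ = 2 ^ (h * d) * (B c + 1) := by ring
          _ ≤ 2 ^ (h * d) * B p := Nat.mul_le_mul_left _ hlt
      have hle : 2 ^ (h * d) * B p ≤ morton h d p + 2 ^ (h * d) * B p := Nat.le_add_left _ _
      omega
    have hBeq : B p = B c := le_antisymm hBpc hBcp
    have hwh : 2 ^ h * 2 ^ (w - h) = 2 ^ w := by rw [← pow_add]; congr 1; omega
    have hbp : ∀ i, p i / 2 ^ h < 2 ^ (w - h) := fun i =>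
      Nat.div_lt_of_lt_mul (by rw [hwh]; exact hp i)
    have hbc : ∀ i, c i / 2 ^ h < 2 ^ (w - h) := fun i =>
      Nat.div_lt_of_lt_mul (by rw [hwh]; exact hc i)
    simp only [hB] at hBeq
    have hpc := morton_inj (w - h) d (fun i => p i / 2 ^ h) (fun i => c i / 2 ^ h) hbp hbc hBeq
    intro i
    obtain ⟨m, hm⟩ := hcdiv i
    have hq := hpc i
    have hdm : c i / 2 ^ h = m := by rw [hm]; exact Nat.mul_div_cancel_left m hpow
    have hmod := Nat.div_add_mod (p i) (2 ^ h)
    have hmlt2 : p i % 2 ^ h < 2 ^ h := Nat.mod_lt _ hpow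
    rw [hq, hdm] at hmod
    constructor <;> omega
end
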